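/- Let X be a real Banach space, let K ⊆ X be closed and nonempty, let x ∈ X \ K, and let x̄ ∈ K be a nearest point to x in K, i.e., ‖x − x̄‖ = d_K(x). If the norm of X is Gateaux differentiable at x − x̄ and d_K⁻(x; x − x̄) = d_K(x), then d_K is Gateaux differentiable at x. -/

import Mathlib

open Filter Topology

/-- A function `f : X → ℝ` is Gateaux differentiable at `x` with Gateaux derivative the
continuous linear functional `A` if for every `y`, `(f (x + t y) - f x)/t → A y` as `t → 0`. -/
def GateauxDiffAt {X : Type*} [NormedAddCommGroup X] [NormedSpace ℝ X]
    (f : X → ℝ) (x : X) (A : X →L[ℝ] ℝ) : Prop :=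
  ∀ y : X, Tendsto (fun t : ℝ => (f (x + t • y) - f x) / t) (𝓝[≠] 0) (𝓝 (A y))


lemma smulyan_aux {X : Type*} [NormedAddCommGroup X] [NormedSpace ℝ X]
    (v : X) (f : X →L[ℝ] ℝ)
    (hf : ∀ y : X, Tendsto (fun t : ℝ => (‖v + t • y‖ - ‖v‖) / t) (𝓝[≠] 0) (𝓝 (f y)))
    (y : X) (ε : ℝ) (hε : 0 < ε) :
    ∃ δ > 0, ∀ g : X →L[ℝ] ℝ, ‖g‖ ≤ 1 → ‖v‖ - δ ≤ g v → f y - ε ≤ g y := by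
  have h := (hf (-y)).mono_left (nhdsWithin_mono 0 (by
    intro t ht
    simp only [Set.mem_Ioi] at ht
    simpa using ne_of_gt ht : Set.Ioi (0:ℝ) ⊆ {(0:ℝ)}ᶜ))
  have hlt : f (-y) < f (-y) + ε / 2 := by linarith
  have hev : ∀ᶠ t in 𝓝[>] (0:ℝ), (‖v + t • (-y)‖ - ‖v‖) / t < f (-y) + ε / 2 :=
    h.eventually_lt_const hlt
  obtain ⟨t, ht, htpos⟩ := (hev.and self_mem_nhdsWithin).exists
  refine ⟨t * (ε / 2), by positivity, fun g hg1 hgv => ?_⟩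
  have htpos' : (0:ℝ) < t := htpos
  have h1 : g (v + t • (-y)) ≤ ‖v + t • (-y)‖ :=
    le_trans (le_abs_self _) (by
      calc |g (v + t • (-y))| ≤ ‖g‖ * ‖v + t • (-y)‖ := g.le_opNorm _
      _ ≤ 1 * ‖v + t • (-y)‖ := by
          exact mul_le_mul_of_nonneg_right hg1 (norm_nonneg _)
      _ = ‖v + t • (-y)‖ := one_mul _)
  have h2 : g (v + t • (-y)) = g v + t * g (-y) := by
    rw [map_add, map_smul]; rfl
  have h3 : t * g (-y) ≤ ‖v + t • (-y)‖ - ‖v‖ + t * (ε / 2) := by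
    rw [h2] at h1; linarith
  have h4 : (‖v + t • (-y)‖ - ‖v‖) / t < f (-y) + ε / 2 := ht
  have h5 : ‖v + t • (-y)‖ - ‖v‖ < t * (f (-y) + ε / 2) := by
    rw [div_lt_iff₀ htpos'] at h4; linarith [h4]
  have h6 : t * g (-y) < t * (f (-y) + ε) := by
    calc t * g (-y) ≤ ‖v + t • (-y)‖ - ‖v‖ + t * (ε / 2) := h3
    _ < t * (f (-y) + ε / 2) + t * (ε / 2) := by linarith
    _ = t * (f (-y) + ε) := by ring
  have h7 : g (-y) < f (-y) + ε := lt_of_mul_lt_mul_left h6 (le_of_lt htpos')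
  have h8 : g (-y) = - g y := by simp
  have h9 : f (-y) = - f y := by simp
  rw [h8, h9] at h7; linarith

section Main

variable {X : Type*} [NormedAddCommGroup X] [NormedSpace ℝ X] [CompleteSpace X]
  (K : Set X)

set_option maxHeartbeats 1000000 in
/-- main lower bound -/
lemma lower_bound_aux (hKne : K.Nonempty)
    (x : X) (xbar : X) (hxbar : xbar ∈ K)
    (hnear : ‖x - xbar‖ = Metric.infDist x K)
    (hDpos : 0 < Metric.infDist x K)
    (f : X →L[ℝ] ℝ)
    (hf : ∀ y : X, Tendsto (fun t : ℝ => (‖(x - xbar) + t • y‖ - ‖x - xbar‖) / t)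
      (𝓝[≠] 0) (𝓝 (f y)))
    (hdini : ∀ η > (0:ℝ), ∀ᶠ s in 𝓝[>] (0:ℝ),
      (1 + s) * Metric.infDist x K - s * η < Metric.infDist (x + s • (x - xbar)) K)
    (y : X) (ε : ℝ) (hε : 0 < ε) :
    ∀ᶠ t in 𝓝[>] (0:ℝ),
      f y - ε ≤ (Metric.infDist (x + t • y) K - Metric.infDist x K) / t := by
  set v := x - xbar with hv
  set D := Metric.infDist x K with hD
  obtain ⟨δ, hδpos, hδ⟩ := smulyan_aux v f hf y (ε/3) (by positivity)
  set C : ℝ := 2 * (2 * ‖y‖ + 1) / δ with hC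
  have hCpos : 0 < C := by positivity
  set η : ℝ := min (ε / (3 * C)) (min (δ / 2) (D / 2)) with hη
  have hηpos : 0 < η := by
    refine lt_min (by positivity) (lt_min (by positivity) (by positivity))
  obtain ⟨s₀, hs₀pos, hs₀⟩ : ∃ s₀ > 0, ∀ s, 0 < s → s < s₀ →
      (1 + s) * D - s * η < Metric.infDist (x + s • v) K := by
    obtain ⟨u, hu, hsub⟩ := mem_nhdsGT_iff_exists_Ioo_subset.mp (hdini η hηpos)
    exact ⟨u, hu, fun s h1 h2 => hsub ⟨h1, h2⟩⟩
  set t₀ : ℝ := min (s₀ / C) (min 1 (ε / 3)) with ht₀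
  have ht₀pos : 0 < t₀ := lt_min (by positivity) (lt_min one_pos (by positivity))
  filter_upwards [Ioo_mem_nhdsGT ht₀pos] with t ht
  obtain ⟨ht0, htlt⟩ := ht
  have ht1 : t ≤ 1 := le_of_lt (lt_of_lt_of_le htlt (le_trans (min_le_right _ _) (min_le_left _ _)))
  have htε : t ≤ ε / 3 := le_of_lt (lt_of_lt_of_le htlt (le_trans (min_le_right _ _) (min_le_right _ _)))
  set s : ℝ := C * t with hs
  have hspos : 0 < s := by positivity
  have hslt : s < s₀ := by
    have : t < s₀ / C := lt_of_lt_of_le htlt (min_le_left _ _)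
    calc s = C * t := rfl
    _ < C * (s₀ / C) := by exact mul_lt_mul_of_pos_left this hCpos
    _ = s₀ := by field_simp
  have hds : (1 + s) * D - s * η < Metric.infDist (x + s • v) K := hs₀ s hspos hslt
  -- choose a near minimizer w for x + t y
  have hlt : Metric.infDist (x + t • y) K < Metric.infDist (x + t • y) K + t ^ 2 := by nlinarith
  obtain ⟨w, hwK, hw⟩ := (Metric.infDist_lt_iff hKne).mp hlt
  set u : X := x - w with hu
  have hw' : ‖x + t • y - w‖ < Metric.infDist (x + t • y) K + t ^ 2 := by
    rw [← dist_eq_norm]; exact hw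
  have hdty_le : Metric.infDist (x + t • y) K ≤ D + t * ‖y‖ := by
    calc Metric.infDist (x + t • y) K ≤ Metric.infDist x K + dist (x + t • y) x :=
      Metric.infDist_le_infDist_add_dist
    _ = D + t * ‖y‖ := by
        rw [dist_eq_norm]
        congr 1
        rw [add_sub_cancel_left, norm_smul, Real.norm_eq_abs, abs_of_pos ht0]
  have hnu : ‖u‖ ≤ D + t * (2 * ‖y‖ + t) := by
    have : ‖u‖ ≤ ‖x + t • y - w‖ + ‖t • y‖ := by
      have : u = (x + t • y - w) + (-(t • y)) := by rw [hu]; abel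
      rw [this]
      exact (norm_add_le _ _).trans (by rw [norm_neg])
    have hny : ‖t • y‖ = t * ‖y‖ := by
      rw [norm_smul, Real.norm_eq_abs, abs_of_pos ht0]
    nlinarith [hw', hdty_le]
  -- the norming functional
  set z : X := u + s • v with hz
  have hzx : z = x + s • v - w := by rw [hz, hu]; abel
  have hnz : Metric.infDist (x + s • v) K ≤ ‖z‖ := by
    rw [hzx, ← dist_eq_norm]
    exact Metric.infDist_le_dist_of_mem hwK
  have hzlb : (1 + s) * D - s * η < ‖z‖ := lt_of_lt_of_le hds hnz
  have hzpos : 0 < ‖z‖ := by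
    have hη2 : η ≤ D / 2 := le_trans (min_le_right _ _) (min_le_right _ _)
    nlinarith
  obtain ⟨g, hg1, hgz⟩ := exists_dual_vector ℝ z (ne_of_gt hzpos)
  have hg1' : ‖g‖ ≤ 1 := le_of_eq hg1
  have hgle : ∀ p : X, g p ≤ ‖p‖ := fun p =>
    le_trans (le_abs_self _) (by
      calc |g p| ≤ ‖g‖ * ‖p‖ := g.le_opNorm _
      _ ≤ 1 * ‖p‖ := mul_le_mul_of_nonneg_right hg1' (norm_nonneg _)
      _ = ‖p‖ := one_mul _)
  have hgz2 : g z = ‖z‖ := by exact_mod_cast hgz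
  have hgz' : g u + s * g v = ‖z‖ := by
    rw [← hgz2, hz, map_add, map_smul]; rfl
  have hgvD : g v ≤ D := le_trans (hgle v) (le_of_eq hnear)
  have hsgv : s * g v ≤ s * D := mul_le_mul_of_nonneg_left hgvD (le_of_lt hspos)
  have hgu : D - s * η ≤ g u := by
    have e : (1 + s) * D - s * η - s * D = D - s * η := by ring
    linarith [hgz', hzlb, hsgv, e]
  have hgv : ‖v‖ - δ ≤ g v := by
    have h2 : g u ≤ ‖u‖ := hgle u
    have expand : (1 + s) * D - s * η - (D + t * (2 * ‖y‖ + t))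
        = s * (D - η) - t * (2 * ‖y‖ + t) := by ring
    have h3 : s * (D - η) - t * (2 * ‖y‖ + t) ≤ s * g v := by
      linarith [hgz', hzlb, hnu, h2, expand]
    have h4 : t * (2 * ‖y‖ + t) ≤ s * (δ / 2) := by
      have e2 : s * (δ / 2) = (2 * ‖y‖ + 1) * t := by
        rw [hs, hC]; field_simp
      rw [e2, mul_comm (2 * ‖y‖ + 1) t]
      exact mul_le_mul_of_nonneg_left (by linarith : 2 * ‖y‖ + t ≤ 2 * ‖y‖ + 1) (le_of_lt ht0)
    have hη3 : η ≤ δ / 2 := le_trans (min_le_right _ _) (min_le_left _ _)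
    have h5 : s * (‖v‖ - δ) ≤ s * g v := by
      have e3 : s * (‖v‖ - δ) = s * ‖v‖ - s * δ := by ring
      have e4 : s * (D - η) = s * D - s * η := by ring
      have e5 : s * η ≤ s * (δ / 2) := mul_le_mul_of_nonneg_left hη3 (le_of_lt hspos)
      have e6 : s * ‖v‖ = s * D := by rw [hnear]
      have e7 : s * δ = s * (δ/2) + s * (δ/2) := by ring
      linarith [h3, h4]
    exact le_of_mul_le_mul_left (by linarith [h5]) hspos
  have hgy : f y - ε / 3 ≤ g y := hδ g hg1' hgv
  -- final estimate
  have hkey : g u + t * g y - t ^ 2 < Metric.infDist (x + t • y) K := by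
    have h1 : g (x + t • y - w) ≤ ‖x + t • y - w‖ := hgle _
    have h2 : g (x + t • y - w) = g u + t * g y := by
      have e : x + t • y - w = u + t • y := by rw [hu]; abel
      rw [e, map_add, map_smul]; rfl
    linarith [hw']
  have hCη : C * η ≤ ε / 3 := by
    have h : η ≤ ε / (3 * C) := min_le_left _ _
    calc C * η ≤ C * (ε / (3 * C)) := mul_le_mul_of_nonneg_left h (le_of_lt hCpos)
    _ = ε / 3 := by field_simp
  rw [le_div_iff₀ ht0]
  have p1 : t * (f y - ε/3) ≤ t * g y := mul_le_mul_of_nonneg_left hgy (le_of_lt ht0)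
  have p2 : s * η ≤ t * (ε/3) := by
    have e : s * η = t * (C * η) := by rw [hs]; ring
    rw [e]
    exact mul_le_mul_of_nonneg_left hCη (le_of_lt ht0)
  have p3 : t ^ 2 ≤ t * (ε/3) := by
    have : t ^ 2 = t * t := sq t
    rw [this]
    exact mul_le_mul_of_nonneg_left htε (le_of_lt ht0)
  have e : (f y - ε) * t = t * (f y - ε/3) - t * (ε/3) - t * (ε/3) := by ring
  linarith [hkey, hgu, p1, p2, p3, e]


end Main

theorem distance_gateauxDiffAt_of_liminf' {X : Type*} [NormedAddCommGroup X]
    [NormedSpace ℝ X] [CompleteSpace X] (K : Set X) (hKc : IsClosed K) (hKne : K.Nonempty)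
    (x : X) (hx : x ∉ K) (xbar : X) (hxbar : xbar ∈ K)
    (hnear : ‖x - xbar‖ = Metric.infDist x K)
    (hnorm : ∃ f : X →L[ℝ] ℝ, ∀ y : X, Tendsto
      (fun t : ℝ => (‖(x - xbar) + t • y‖ - ‖x - xbar‖) / t) (𝓝[≠] 0) (𝓝 (f y)))
    (hliminf : liminf
      (fun t : ℝ => (Metric.infDist (x + t • (x - xbar)) K - Metric.infDist x K) / t)
      (𝓝[>] 0) = Metric.infDist x K) :
    ∃ A : X →L[ℝ] ℝ, ∀ y : X, Tendsto
      (fun t : ℝ => (Metric.infDist (x + t • y) K - Metric.infDist x K) / t)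
      (𝓝[≠] 0) (𝓝 (A y)) := by
  obtain ⟨f, hf⟩ := hnorm
  set v := x - xbar with hv
  set D := Metric.infDist x K with hD
  have hnear' : ‖v‖ = D := hnear
  have hDpos : 0 < D := (hKc.notMem_iff_infDist_pos hKne).mp hx
  -- the Dini condition: eventual lower bound
  have hdini : ∀ η > (0:ℝ), ∀ᶠ s in 𝓝[>] (0:ℝ),
      (1 + s) * D - s * η < Metric.infDist (x + s • v) K := by
    intro η hηpos
    have hlt : D - η < liminf
        (fun s : ℝ => (Metric.infDist (x + s • v) K - D) / s) (𝓝[>] 0) := by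
      rw [hliminf]; linarith
    have hbdd : IsBoundedUnder (· ≥ ·) (𝓝[>] (0:ℝ))
        (fun s : ℝ => (Metric.infDist (x + s • v) K - D) / s) := by
      refine ⟨-D, ?_⟩
      rw [eventually_map]
      filter_upwards [self_mem_nhdsWithin] with s hs
      have hs' : (0:ℝ) < s := hs
      have h1 : D ≤ Metric.infDist (x + s • v) K + s * D := by
        calc D = Metric.infDist x K := hD
        _ ≤ Metric.infDist (x + s • v) K + dist x (x + s • v) :=
          Metric.infDist_le_infDist_add_dist
        _ = Metric.infDist (x + s • v) K + s * D := by
            rw [dist_eq_norm]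
            congr 1
            have e : x - (x + s • v) = -(s • v) := by abel
            rw [e, norm_neg, norm_smul, Real.norm_eq_abs, abs_of_pos hs', hnear']
      simp only [ge_iff_le, le_div_iff₀ hs']
      linarith
    filter_upwards [eventually_lt_of_lt_liminf hlt hbdd, self_mem_nhdsWithin] with s h hs
    have hs' : (0:ℝ) < s := hs
    rw [lt_div_iff₀ hs'] at h
    linarith
  -- one-sided convergence for every direction
  have hpos : ∀ y : X, Tendsto
      (fun t : ℝ => (Metric.infDist (x + t • y) K - D) / t) (𝓝[>] 0) (𝓝 (f y)) := by
    intro y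
    rw [Metric.tendsto_nhds]
    intro ε hε
    have hlow := lower_bound_aux K hKne x xbar hxbar hnear hDpos f hf hdini y (ε/2)
      (by positivity)
    have hupper : ∀ᶠ t in 𝓝[>] (0:ℝ),
        (Metric.infDist (x + t • y) K - D) / t ≤ (‖v + t • y‖ - ‖v‖) / t := by
      filter_upwards [self_mem_nhdsWithin] with t ht
      have ht' : (0:ℝ) < t := ht
      have h1 : Metric.infDist (x + t • y) K ≤ ‖v + t • y‖ := by
        calc Metric.infDist (x + t • y) K ≤ dist (x + t • y) xbar :=
          Metric.infDist_le_dist_of_mem hxbar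
        _ = ‖v + t • y‖ := by rw [dist_eq_norm]; congr 1; rw [hv]; abel
      have h2 : Metric.infDist (x + t • y) K - D ≤ ‖v + t • y‖ - ‖v‖ := by
        rw [hnear']; linarith
      exact (div_le_div_iff_of_pos_right ht').mpr h2
    have hnormub : ∀ᶠ t in 𝓝[>] (0:ℝ), (‖v + t • y‖ - ‖v‖) / t < f y + ε/2 := by
      have h := (hf y).mono_left (nhdsWithin_mono 0 (fun t ht => by
        simp only [Set.mem_Ioi] at ht
        simpa using ne_of_gt ht : Set.Ioi (0:ℝ) ⊆ {(0:ℝ)}ᶜ))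
      exact h.eventually_lt_const (by linarith)
    filter_upwards [hlow, hupper, hnormub] with t h1 h2 h3
    rw [Real.dist_eq, abs_sub_lt_iff]
    constructor <;> linarith
  refine ⟨f, fun y => ?_⟩
  have hneg : Tendsto
      (fun t : ℝ => (Metric.infDist (x + t • y) K - D) / t) (𝓝[<] 0) (𝓝 (f y)) := by
    have hmap : Tendsto (fun t : ℝ => -t) (𝓝[<] (0:ℝ)) (𝓝[>] (0:ℝ)) := by
      apply tendsto_nhdsWithin_of_tendsto_nhds_of_eventually_within
      · have : Tendsto (fun t : ℝ => -t) (𝓝 (0:ℝ)) (𝓝 (-(0:ℝ))) :=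
          (continuous_neg.tendsto 0)
        simpa using this.mono_left nhdsWithin_le_nhds
      · filter_upwards [self_mem_nhdsWithin] with t ht
        simp only [Set.mem_Iio] at ht
        simpa using ht
    have hcomp := (hpos (-y)).comp hmap
    have heq : ∀ t : ℝ, ((fun s : ℝ => (Metric.infDist (x + s • (-y)) K - D) / s) ∘
        (fun t : ℝ => -t)) t
        = -((Metric.infDist (x + t • y) K - D) / t) := by
      intro t
      simp only [Function.comp_apply, neg_smul, smul_neg, neg_neg, div_neg]
    have : Tendsto (fun t : ℝ => -((Metric.infDist (x + t • y) K - D) / t))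
        (𝓝[<] 0) (𝓝 (f (-y))) := hcomp.congr heq
    have h2 := this.neg
    simp only [neg_neg, map_neg] at h2 ⊢
    simpa using h2
  have hfull : Tendsto
      (fun t : ℝ => (Metric.infDist (x + t • y) K - D) / t) (𝓝[≠] 0) (𝓝 (f y)) := by
    rw [← nhdsLT_sup_nhdsGT (0:ℝ)]
    exact tendsto_sup.mpr ⟨hneg, hpos y⟩
  exact hfull

/-- Let `K ⊆ X` be closed and nonempty, `x ∉ K`, and `x̄ ∈ K` a nearest point to `x` in `K`.
If the norm of `X` is Gateaux differentiable at `x - x̄` and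
`d_K⁻(x; x - x̄) = liminf_{t→0⁺} (d_K(x + t(x - x̄)) - d_K(x))/t = d_K(x)`,
then `d_K` is Gateaux differentiable at `x`. -/
theorem distance_gateauxDiffAt_of_liminf {X : Type*} [NormedAddCommGroup X]
    [NormedSpace ℝ X] [CompleteSpace X] (K : Set X) (hKc : IsClosed K) (hKne : K.Nonempty)
    (x : X) (hx : x ∉ K) (xbar : X) (hxbar : xbar ∈ K)
    (hnear : ‖x - xbar‖ = Metric.infDist x K)
    (hnorm : ∃ f : X →L[ℝ] ℝ, GateauxDiffAt (fun y : X => ‖y‖) (x - xbar) f)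
    (hliminf : liminf
      (fun t : ℝ => (Metric.infDist (x + t • (x - xbar)) K - Metric.infDist x K) / t)
      (𝓝[>] 0) = Metric.infDist x K) :
    ∃ A : X →L[ℝ] ℝ, GateauxDiffAt (fun y : X => Metric.infDist y K) x A := by
  exact distance_gateauxDiffAt_of_liminf' K hKc hKne x hx xbar hxbar hnear hnorm hliminf
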